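/- Let $(\Omega, \mathcal{F}, P)$ be a probability space, $G \ge 1$, $p \in (0,1)$, $\varepsilon \ge 0$, and let $(r_j, X_j)_{j=1}^G$ with $r_j : \Omega \to \{\text{true}, \text{false}\}$ and $X_j : \Omega \to \mathbb{R}$ be independent, identically distributed pairs such that almost surely $0 \le X_j \le 1$, $P(r_1 = \text{true}) = p$, and the conditional means $\mu_h = \frac{1}{p}\mathbb{E}[X_1 \mathbf{1}_{\{r_1 = \text{true}\}}]$ and $\mu_l = \frac{1}{1-p}\mathbb{E}[X_1 \mathbf{1}_{\{r_1 = \text{false}\}}]$ satisfy $|\mu_h - \mu_l| \ge \varepsilon$. Define $\bar{X} = \frac{1}{G}\sum_{j=1}^G X_j$ and $\sigma_g^2 = \frac{1}{G}\sum_{j=1}^G (X_j - \bar{X})^2$. Then $\mathbb{E}[\sigma_g^2] \ge \frac{G-1}{G}\, p(1-p)\, \varepsilon^2$. -/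

import Mathlib

open MeasureTheory ProbabilityTheory

lemma cs_aux {Ω : Type*} [MeasurableSpace Ω] (P : Measure Ω) [IsProbabilityMeasure P]
    {A : Set Ω} (_hA : MeasurableSet A) {q : ℝ} (hq : 0 < q)
    (hPA : P A = ENNReal.ofReal q)
    {f : Ω → ℝ} (hf : Measurable f) (hb : ∀ᵐ ω ∂P, ‖f ω‖ ≤ 1) :
    (∫ ω in A, f ω ∂P) ^ 2 ≤ q * ∫ ω in A, f ω ^ 2 ∂P := by
  set ν : Measure Ω := (ENNReal.ofReal q)⁻¹ • P.restrict A with hν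
  have hq0 : ENNReal.ofReal q ≠ 0 := (ENNReal.ofReal_pos.mpr hq).ne'
  have hqt : ENNReal.ofReal q ≠ ⊤ := ENNReal.ofReal_ne_top
  haveI : IsProbabilityMeasure ν := by
    constructor
    simp [hν, Measure.smul_apply, Measure.restrict_apply_univ, hPA,
      ENNReal.inv_mul_cancel hq0 hqt]
  have hbν : ∀ᵐ ω ∂ν, ‖f ω‖ ≤ 1 := by
    rw [hν]
    exact Measure.ae_smul_measure (ae_restrict_of_ae hb) _
  have hmem : MemLp f 2 ν := MemLp.of_bound hf.aestronglyMeasurable 1 hbν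
  have hvar := variance_nonneg f ν
  rw [variance_eq_sub hmem] at hvar
  have htr : ((ENNReal.ofReal q)⁻¹).toReal = q⁻¹ := by
    rw [ENNReal.toReal_inv, ENNReal.toReal_ofReal hq.le]
  have h1 : ∫ ω, f ω ∂ν = q⁻¹ * ∫ ω in A, f ω ∂P := by
    rw [hν, integral_smul_measure, htr, smul_eq_mul]
  have h2 : ∫ ω, (f ^ 2) ω ∂ν = q⁻¹ * ∫ ω in A, f ω ^ 2 ∂P := by
    rw [hν, integral_smul_measure, htr, smul_eq_mul]
    simp [Pi.pow_apply]
  rw [h1, h2] at hvar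
  set I := ∫ ω in A, f ω ∂P with hI
  set J := ∫ ω in A, f ω ^ 2 ∂P with hJ
  have h3 : (q⁻¹ * I) ^ 2 ≤ q⁻¹ * J := by linarith
  have h4 : q * (q⁻¹ * I) ^ 2 ≤ q * (q⁻¹ * J) := mul_le_mul_of_nonneg_left h3 hq.le
  have e1 : q * (q⁻¹ * J) = J := by field_simp
  rw [e1] at h4
  have h5 : q * (q * (q⁻¹ * I) ^ 2) ≤ q * J := mul_le_mul_of_nonneg_left h4 hq.le
  have e2 : q * (q * (q⁻¹ * I) ^ 2) = I ^ 2 := by field_simp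
  linarith

theorem variance_guarantee_via_reward_conditioning
    {Ω : Type*} [MeasurableSpace Ω] (P : Measure Ω) [IsProbabilityMeasure P]
    {G : ℕ} (hG : 1 ≤ G) {p : ℝ} (hp0 : 0 < p) (hp1 : p < 1)
    {ε : ℝ} (hε : 0 ≤ ε)
    (r : Fin G → Ω → Bool) (X : Fin G → Ω → ℝ)
    (hmeas : ∀ j, Measurable (fun ω => (r j ω, X j ω)))
    (hindep : iIndepFun (fun j ω => (r j ω, X j ω)) P)
    (hident : ∀ j, IdentDistrib (fun ω => (r j ω, X j ω))
        (fun ω => (r ⟨0, hG⟩ ω, X ⟨0, hG⟩ ω)) P P)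
    (hbound : ∀ j, ∀ᵐ ω ∂P, X j ω ∈ Set.Icc (0 : ℝ) 1)
    (hPr : P {ω | r ⟨0, hG⟩ ω = true} = ENNReal.ofReal p)
    (μh μl : ℝ)
    (hμh : μh = (1 / p) *
        ∫ ω, X ⟨0, hG⟩ ω * Set.indicator {ω | r ⟨0, hG⟩ ω = true} (fun _ => (1 : ℝ)) ω ∂P)
    (hμl : μl = (1 / (1 - p)) *
        ∫ ω, X ⟨0, hG⟩ ω * Set.indicator {ω | r ⟨0, hG⟩ ω = false} (fun _ => (1 : ℝ)) ω ∂P)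
    (hsep : ε ≤ |μh - μl|) :
    ((G - 1 : ℝ) / G) * (p * (1 - p)) * ε ^ 2 ≤
      ∫ ω, (1 / G : ℝ) * ∑ j, (X j ω - (1 / G : ℝ) * ∑ k, X k ω) ^ 2 ∂P := by
  classical
  set j0 : Fin G := ⟨0, hG⟩ with hj0
  have hGpos : (0 : ℝ) < G := by
    have : (1 : ℝ) ≤ (G : ℝ) := by exact_mod_cast hG
    linarith
  have hGne : (G : ℝ) ≠ 0 := hGpos.ne'
  -- measurability and bounds
  have hXm : ∀ j, Measurable (X j) := fun j => measurable_snd.comp (hmeas j)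
  have hXb : ∀ j, ∀ᵐ ω ∂P, ‖X j ω‖ ≤ 1 := by
    intro j
    filter_upwards [hbound j] with ω hω
    rw [Real.norm_eq_abs, abs_le]
    exact ⟨by linarith [hω.1], hω.2⟩
  have hXint : ∀ j, Integrable (X j) P := fun j =>
    memLp_one_iff_integrable.mp (MemLp.of_bound (hXm j).aestronglyMeasurable 1 (hXb j))
  have hXXint : ∀ j k, Integrable (fun ω => X j ω * X k ω) P := by
    intro j k
    apply memLp_one_iff_integrable.mp
    apply MemLp.of_bound ((hXm j).mul (hXm k)).aestronglyMeasurable 1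
    filter_upwards [hXb j, hXb k] with ω h1 h2
    rw [Pi.mul_apply, norm_mul]
    exact mul_le_one₀ h1 (norm_nonneg _) h2
  have hsq : ∀ j, Integrable (fun ω => X j ω ^ 2) P := by
    intro j
    simpa [pow_two] using hXXint j j
  -- identical distribution
  have hid : ∀ j, IdentDistrib (X j) (X j0) P P := fun j => (hident j).comp measurable_snd
  set m1 : ℝ := ∫ ω, X j0 ω ∂P with hm1def
  set m2 : ℝ := ∫ ω, X j0 ω ^ 2 ∂P with hm2def
  have hEj : ∀ j, ∫ ω, X j ω ∂P = m1 := fun j => (hid j).integral_eq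
  have hEsq : ∀ j, ∫ ω, X j ω ^ 2 ∂P = m2 := fun j =>
    ((hid j).comp (measurable_id.pow_const 2)).integral_eq
  -- independence
  have hXind : iIndepFun X P :=
    hindep.comp (fun _ => Prod.snd) (fun _ => measurable_snd)
  have hprod : ∀ j k, j ≠ k → ∫ ω, X j ω * X k ω ∂P = m1 * m1 := by
    intro j k hjk
    have h := (hXind.indepFun hjk).integral_mul_eq_mul_integral (hXint j).aestronglyMeasurable (hXint k).aestronglyMeasurable
    have h2 : integral P (X j) = m1 := hEj j
    have h3 : integral P (X k) = m1 := hEj k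
    rw [h2, h3] at h
    exact h
  -- pointwise expansion of the group variance
  have hpt : ∀ ω, (1 / G : ℝ) * ∑ j, (X j ω - (1 / G : ℝ) * ∑ k, X k ω) ^ 2
      = (1 / G : ℝ) * ∑ j, X j ω ^ 2
        - (1 / G : ℝ) ^ 2 * ∑ j, ∑ k, X j ω * X k ω := by
    intro ω
    set s := ∑ k, X k ω with hs
    have e1 : ∀ j : Fin G, (X j ω - (1 / G : ℝ) * s) ^ 2
        = X j ω ^ 2 - (2 * (1 / G : ℝ) * s) * X j ω + ((1 / G : ℝ) * s) ^ 2 := fun j => by ring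
    have e2 : ∑ j, (X j ω - (1 / G : ℝ) * s) ^ 2
        = (∑ j, X j ω ^ 2) - (2 * (1 / G : ℝ) * s) * s + (G : ℝ) * ((1 / G : ℝ) * s) ^ 2 := by
      simp only [e1]
      rw [Finset.sum_add_distrib, Finset.sum_sub_distrib, ← Finset.mul_sum, ← hs,
        Finset.sum_const, Finset.card_univ, Fintype.card_fin, nsmul_eq_mul]
    have e3 : ∑ j, ∑ k, X j ω * X k ω = s * s := by
      rw [hs, Finset.sum_mul_sum]
    rw [e2, e3]
    field_simp
    ring
  have hint_eq : ∫ ω, (1 / G : ℝ) * ∑ j, (X j ω - (1 / G : ℝ) * ∑ k, X k ω) ^ 2 ∂P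
      = ((G : ℝ) - 1) / G * (m2 - m1 ^ 2) := by
    rw [integral_congr_ae (Filter.Eventually.of_forall hpt)]
    have I1 : Integrable (fun ω => (1 / G : ℝ) * ∑ j, X j ω ^ 2) P :=
      (integrable_finset_sum _ (fun j _ => hsq j)).const_mul _
    have I2 : Integrable (fun ω => (1 / G : ℝ) ^ 2 * ∑ j, ∑ k, X j ω * X k ω) P :=
      (integrable_finset_sum _ (fun j _ =>
        integrable_finset_sum _ (fun k _ => hXXint j k))).const_mul _
    rw [integral_sub I1 I2, integral_const_mul, integral_const_mul,
      integral_finset_sum _ (fun j _ => hsq j),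
      integral_finset_sum _ (fun j _ => integrable_finset_sum _ (fun k _ => hXXint j k))]
    have hinner : ∀ j : Fin G, ∫ ω, ∑ k, X j ω * X k ω ∂P = ∑ k, ∫ ω, X j ω * X k ω ∂P :=
      fun j => integral_finset_sum _ (fun k _ => hXXint j k)
    have hval : ∀ j : Fin G, ∑ k, ∫ ω, X j ω * X k ω ∂P
        = (G : ℝ) * m1 ^ 2 + (m2 - m1 ^ 2) := by
      intro j
      have : ∀ k : Fin G, ∫ ω, X j ω * X k ω ∂P
          = m1 ^ 2 + (if j = k then m2 - m1 ^ 2 else 0) := by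
        intro k
        by_cases h : j = k
        · subst h
          have h2 := hEsq j
          simp only [pow_two] at h2
          rw [h2, if_pos rfl]
          ring
        · rw [if_neg h, hprod j k h]
          ring
      simp only [this]
      rw [Finset.sum_add_distrib, Finset.sum_const, Finset.card_univ, Fintype.card_fin,
        nsmul_eq_mul, Finset.sum_ite_eq]
      simp
    simp only [hinner, hEsq, hval, Finset.sum_const, Finset.card_univ, Fintype.card_fin, nsmul_eq_mul]
    field_simp
    ring
  -- Step B : m2 - m1^2 ≥ p(1-p) ε^2
  set A : Set Ω := {ω | r j0 ω = true} with hA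
  have hAm : MeasurableSet A := by
    have hr : Measurable (r j0) := measurable_fst.comp (hmeas j0)
    exact hr (measurableSet_singleton true)
  have hAc : {ω | r j0 ω = false} = Aᶜ := by
    ext ω
    simp [hA, Set.mem_compl_iff, Bool.not_eq_true]
  have hPAc : P Aᶜ = ENNReal.ofReal (1 - p) := by
    rw [prob_compl_eq_one_sub hAm, hA]
    rw [hPr, ← ENNReal.ofReal_one, ← ENNReal.ofReal_sub _ hp0.le]
  set a : ℝ := ∫ ω in A, X j0 ω ∂P with ha
  set b : ℝ := ∫ ω in Aᶜ, X j0 ω ∂P with hb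
  have hind_eq : ∀ (S : Set Ω), MeasurableSet S →
      ∫ ω, X j0 ω * Set.indicator S (fun _ => (1 : ℝ)) ω ∂P = ∫ ω in S, X j0 ω ∂P := by
    intro S hS
    rw [← integral_indicator hS]
    congr 1
    ext ω
    by_cases h : ω ∈ S <;> simp [Set.indicator, h]
  have hμh' : μh = (1 / p) * a := by
    rw [hμh, hind_eq A hAm]
  have hμl' : μl = (1 / (1 - p)) * b := by
    rw [hμl, hAc, hind_eq Aᶜ hAm.compl]
  have hm1ab : a + b = m1 := integral_add_compl hAm (hXint j0)
  have hm2ab : (∫ ω in A, X j0 ω ^ 2 ∂P) + (∫ ω in Aᶜ, X j0 ω ^ 2 ∂P) = m2 :=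
    integral_add_compl hAm (hsq j0)
  have ha2 : a ^ 2 ≤ p * ∫ ω in A, X j0 ω ^ 2 ∂P :=
    cs_aux P hAm hp0 hPr (hXm j0) (hXb j0)
  have hb2 : b ^ 2 ≤ (1 - p) * ∫ ω in Aᶜ, X j0 ω ^ 2 ∂P :=
    cs_aux P hAm.compl (by linarith) hPAc (hXm j0) (hXb j0)
  have hq1 : (0 : ℝ) < 1 - p := by linarith
  have haμ : a = p * μh := by
    rw [hμh']; field_simp
  have hbμ : b = (1 - p) * μl := by
    rw [hμl']
    rw [one_div, ← mul_assoc, mul_inv_cancel₀ hq1.ne', one_mul]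
  have hvarB : p * (1 - p) * (μh - μl) ^ 2 ≤ m2 - m1 ^ 2 := by
    have hkey : p * (1 - p) * (p * (1 - p) * (μh - μl) ^ 2)
        ≤ p * (1 - p) * (m2 - m1 ^ 2) := by
      have h1 : (1 - p) * a ^ 2 ≤ (1 - p) * (p * ∫ ω in A, X j0 ω ^ 2 ∂P) :=
        mul_le_mul_of_nonneg_left ha2 hq1.le
      have h2 : p * b ^ 2 ≤ p * ((1 - p) * ∫ ω in Aᶜ, X j0 ω ^ 2 ∂P) :=
        mul_le_mul_of_nonneg_left hb2 hp0.le
      calc p * (1 - p) * (p * (1 - p) * (μh - μl) ^ 2)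
          = (1 - p) * a ^ 2 + p * b ^ 2 - p * (1 - p) * (a + b) ^ 2 := by
            rw [haμ, hbμ]; ring
        _ ≤ (1 - p) * (p * ∫ ω in A, X j0 ω ^ 2 ∂P)
              + p * ((1 - p) * ∫ ω in Aᶜ, X j0 ω ^ 2 ∂P)
              - p * (1 - p) * (a + b) ^ 2 := by linarith
        _ = p * (1 - p) * (((∫ ω in A, X j0 ω ^ 2 ∂P) + (∫ ω in Aᶜ, X j0 ω ^ 2 ∂P))
              - (a + b) ^ 2) := by ring
        _ = p * (1 - p) * (m2 - m1 ^ 2) := by rw [hm2ab, hm1ab]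
    have hpq : (0 : ℝ) < p * (1 - p) := mul_pos hp0 hq1
    exact le_of_mul_le_mul_left hkey hpq
  have hd : ε ^ 2 ≤ (μh - μl) ^ 2 := by
    calc ε ^ 2 ≤ |μh - μl| ^ 2 := pow_le_pow_left₀ hε hsep 2
    _ = (μh - μl) ^ 2 := sq_abs _
  have hB : p * (1 - p) * ε ^ 2 ≤ m2 - m1 ^ 2 := by
    have := mul_le_mul_of_nonneg_left hd (mul_pos hp0 hq1).le
    linarith
  have hfrac : (0 : ℝ) ≤ ((G : ℝ) - 1) / G := by
    apply div_nonneg _ hGpos.le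
    have : (1 : ℝ) ≤ (G : ℝ) := by exact_mod_cast hG
    linarith
  rw [hint_eq]
  calc ((G : ℝ) - 1) / G * (p * (1 - p)) * ε ^ 2
      = ((G : ℝ) - 1) / G * (p * (1 - p) * ε ^ 2) := by ring
    _ ≤ ((G : ℝ) - 1) / G * (m2 - m1 ^ 2) := mul_le_mul_of_nonneg_left hB hfrac
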